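/- Let p₁, p₂ > 0 be real constants, let I ⊆ ℝ be an interval, and let u₁, u₂, v : I → ℝ be functions with u₁, u₂ twice differentiable and v differentiable, satisfying the mechanical system with λ = 0: ü_α = v·u̇_α + e^{−2u_α} for α = 1, 2, and v̇ = p₁ u̇₁² + p₂ u̇₂². Then the quantity I(s) := p₁(u̇₁(s)² + e^{−2u₁(s)}) + p₂(u̇₂(s)² + e^{−2u₂(s)}) − v(s)² is constant on I. -/

import Mathlib

/-- For the mechanical system with `λ = 0`,
`ü_α = v·u̇_α + e^{−2u_α}` (α = 1,2), `v̇ = p₁u̇₁² + p₂u̇₂²`, the Ivey quantity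
`I(s) = p₁(u̇₁² + e^{−2u₁}) + p₂(u̇₂² + e^{−2u₂}) − v²` is constant on the interval. -/
theorem mechanical_system_ivey_invariant
    (p₁ p₂ : ℝ) (hp₁ : 0 < p₁) (hp₂ : 0 < p₂)
    (I : Set ℝ) (hI : I.OrdConnected)
    (u₁ u₂ du₁ du₂ v : ℝ → ℝ)
    (hu₁ : ∀ s ∈ I, HasDerivAt u₁ (du₁ s) s)
    (hu₂ : ∀ s ∈ I, HasDerivAt u₂ (du₂ s) s)
    (hdu₁ : ∀ s ∈ I, HasDerivAt du₁ (v s * du₁ s + Real.exp (-2 * u₁ s)) s)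
    (hdu₂ : ∀ s ∈ I, HasDerivAt du₂ (v s * du₂ s + Real.exp (-2 * u₂ s)) s)
    (hv : ∀ s ∈ I, HasDerivAt v (p₁ * (du₁ s) ^ 2 + p₂ * (du₂ s) ^ 2) s) :
    ∀ s ∈ I, ∀ t ∈ I,
      p₁ * ((du₁ s) ^ 2 + Real.exp (-2 * u₁ s))
        + p₂ * ((du₂ s) ^ 2 + Real.exp (-2 * u₂ s)) - (v s) ^ 2
      = p₁ * ((du₁ t) ^ 2 + Real.exp (-2 * u₁ t))
        + p₂ * ((du₂ t) ^ 2 + Real.exp (-2 * u₂ t)) - (v t) ^ 2 := by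
  intro s hs t ht
  set F : ℝ → ℝ := fun x =>
    p₁ * ((du₁ x) ^ 2 + Real.exp (-2 * u₁ x))
      + p₂ * ((du₂ x) ^ 2 + Real.exp (-2 * u₂ x)) - (v x) ^ 2 with hF
  have hconv : Convex ℝ I := hI.convex
  have hder : ∀ x ∈ I, HasDerivWithinAt F 0 I x := by
    intro x hx
    have h1 := ((hdu₁ x hx).pow 2).add
      (((hu₁ x hx).const_mul (-2)).exp)
    have h2 := ((hdu₂ x hx).pow 2).add
      (((hu₂ x hx).const_mul (-2)).exp)
    have hD := (((h1.const_mul p₁).add (h2.const_mul p₂)).sub ((hv x hx).pow 2))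
    have hval : (p₁ * (2 * du₁ x ^ (2 - 1) * (v x * du₁ x + Real.exp (-2 * u₁ x)))
        + p₂ * (2 * du₂ x ^ (2 - 1) * (v x * du₂ x + Real.exp (-2 * u₂ x))))
        + (p₁ * (Real.exp (-2 * u₁ x) * (-2 * du₁ x))
          + p₂ * (Real.exp (-2 * u₂ x) * (-2 * du₂ x)))
        - 2 * v x ^ (2 - 1) * (p₁ * du₁ x ^ 2 + p₂ * du₂ x ^ 2) = 0 := by
      ring
    have hD' : HasDerivAt F 0 x := by
      have := hD
      simp only [hF]
      exact this.congr_deriv (by ring)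
    exact hD'.hasDerivWithinAt
  have key := hconv.norm_image_sub_le_of_norm_hasDerivWithin_le
    (f' := fun _ => (0 : ℝ)) (C := 0) hder (fun x _ => by simp) ht hs
  have : ‖F s - F t‖ ≤ 0 := by simpa using key
  have := norm_le_zero_iff.mp this
  exact sub_eq_zero.mp this
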